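/- arXiv:1007.2769 — 3 statements merged into one kernel-verified Lean document; each statement's English description precedes it below -/
import Mathlib

section
/- Fix m ≥ 1 and p_0, p_1 ∈ ℕ with p_0 + p_1 = m, and let c = {v ∈ I(2,2m) : |v| is fixed-point-free and #{i : z_i(v) = 0} = 2p_0} (the S_{2m}-conjugacy class c_{0,0,p_0,p_1} of involutions of B_{2m} with no fixed points). Then for every g ∈ B_{2m}: Σ_{v ∈ c, |g|v|g|⁻¹ = v} (−1)^{⟨g,v⟩ + inv_v(g)} = (−1)^{inv(|g|)} · Σ_{v ∈ c, |g|v|g|⁻¹ = v} (−1)^{⟨g,v⟩}. (This is the identity of characters expressing that the representation ϱ of B_{2m} on the span of {C_v : v ∈ c} is isomorphic to the tensor product of the linear character g ↦ (−1)^{inv(|g|)} with the representation φ on the same span.) -/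
noncomputable section

/-- The wreath product `G(r,n) = C_r ≀ S_n`, realized as pairs of a color vector
`z : Fin n → ZMod r` and a permutation `p` of `Fin n`. -/
@[ext] structure WreathG (r n : ℕ) where
  z : Fin n → ZMod r
  p : Equiv.Perm (Fin n)

namespace WreathG

variable {r n : ℕ}

instance : One (WreathG r n) := ⟨⟨0, 1⟩⟩
instance : Mul (WreathG r n) := ⟨fun g h => ⟨g.z + h.z ∘ g.p.symm, g.p * h.p⟩⟩
instance : Inv (WreathG r n) := ⟨fun g => ⟨-(g.z ∘ g.p), g.p⁻¹⟩⟩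

@[simp] theorem one_z : (1 : WreathG r n).z = 0 := rfl
@[simp] theorem one_p : (1 : WreathG r n).p = 1 := rfl
@[simp] theorem mul_z (a b : WreathG r n) : (a * b).z = a.z + b.z ∘ a.p.symm := rfl
@[simp] theorem mul_p (a b : WreathG r n) : (a * b).p = a.p * b.p := rfl
@[simp] theorem inv_z (a : WreathG r n) : (a⁻¹).z = -(a.z ∘ a.p) := rfl
@[simp] theorem inv_p (a : WreathG r n) : (a⁻¹).p = a.p⁻¹ := rfl

instance : Group (WreathG r n) :=
  Group.ofLeftAxioms
    (fun a b c => by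
      refine WreathG.ext ?_ (mul_assoc a.p b.p c.p)
      funext x
      show (a.z x + b.z (a.p.symm x)) + c.z ((a.p * b.p).symm x)
          = a.z x + (b.z (a.p.symm x) + c.z (b.p.symm (a.p.symm x)))
      have h : (a.p * b.p).symm x = b.p.symm (a.p.symm x) := rfl
      rw [h, add_assoc])
    (fun a => by
      refine WreathG.ext ?_ (one_mul a.p)
      funext x
      show 0 + a.z ((1 : Equiv.Perm (Fin n)).symm x) = a.z x
      simp
      rfl)
    (fun a => by
      refine WreathG.ext ?_ (inv_mul_cancel a.p)
      funext x
      show -(a.z (a.p x)) + a.z ((a.p⁻¹).symm x) = 0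
      have h : (a.p⁻¹).symm x = a.p x := rfl
      rw [h, neg_add_cancel])

/-- An absolute involution of `G(r,n)`: `|v|² = 1` and `z ∘ |v| = z`. -/
def IsAbsInv (v : WreathG r n) : Prop := v.p ^ 2 = 1 ∧ v.z ∘ v.p = v.z

instance (v : WreathG r n) : Decidable (IsAbsInv v) :=
  inferInstanceAs (Decidable (_ ∧ _))

/-- Absolute conjugation `τ·(z,σ)·τ⁻¹ = (z ∘ τ⁻¹, τστ⁻¹)`. -/
def aconj (τ : Equiv.Perm (Fin n)) (v : WreathG r n) : WreathG r n :=
  ⟨v.z ∘ τ.symm, τ * v.p * τ⁻¹⟩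

theorem IsAbsInv.aconj {v : WreathG r n} (h : IsAbsInv v) (τ : Equiv.Perm (Fin n)) :
    IsAbsInv (WreathG.aconj τ v) := by
  obtain ⟨h1, h2⟩ := h
  constructor
  · show (τ * v.p * τ⁻¹) ^ 2 = 1
    have key : (τ * v.p * τ⁻¹) * (τ * v.p * τ⁻¹) = τ * (v.p * v.p) * τ⁻¹ := by
      simp [mul_assoc]
    rw [sq, key, ← sq, h1, mul_one, mul_inv_cancel]
  · funext x
    have := congrFun h2 (τ.symm x)
    simpa [WreathG.aconj, Function.comp] using this

/-- `⟨g,v⟩ = ∑ i z_i(g)·z_i(v) ∈ ZMod r`. -/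
def pairing (g v : WreathG r n) : ZMod r := ∑ i, g.z i * v.z i

/-- `inv_v(g)`: the number of pairs `i < j` with `|v|(i) = j` and `|g|(i) > |g|(j)`. -/
def invv (v g : WreathG r n) : ℕ :=
  Nat.card {q : Fin n × Fin n // q.1 < q.2 ∧ v.p q.1 = q.2 ∧ g.p q.2 < g.p q.1}

/-- The number of inversions of a permutation. -/
def invPerm (σ : Equiv.Perm (Fin n)) : ℕ :=
  Nat.card {q : Fin n × Fin n // q.1 < q.2 ∧ σ q.2 < σ q.1}

/-- `fix_i(v)`: the number of `j` with `|v|(j) = j` and `z_j(v) = i`. -/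
def fixc (v : WreathG r n) (i : ZMod r) : ℕ :=
  Nat.card {j : Fin n // v.p j = j ∧ v.z j = i}

/-- `pair_i(v)`: the number of pairs `j < k` with `|v|(j) = k` and `z_j(v) = z_k(v) = i`. -/
def pairc (v : WreathG r n) (i : ZMod r) : ℕ :=
  Nat.card {q : Fin n × Fin n // q.1 < q.2 ∧ v.p q.1 = q.2 ∧ v.z q.1 = i ∧ v.z q.2 = i}

instance : DecidableEq (WreathG r n) := fun a b =>
  decidable_of_iff (a.z = b.z ∧ a.p = b.p)
    (by constructor
        · rintro ⟨h1, h2⟩; exact WreathG.ext h1 h2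
        · rintro rfl; exact ⟨rfl, rfl⟩)

instance [NeZero r] : Fintype (WreathG r n) :=
  Fintype.ofEquiv ((Fin n → ZMod r) × Equiv.Perm (Fin n))
    { toFun := fun x => ⟨x.1, x.2⟩
      invFun := fun g => (g.z, g.p)
      left_inv := fun _ => rfl
      right_inv := fun _ => rfl }

end WreathG

/-- The set `I(r,n)` of absolute involutions, as a subtype. -/
abbrev AbsInv (r n : ℕ) := {v : WreathG r n // WreathG.IsAbsInv v}

/-- The model space `M`: the complex vector space with basis `{C_v : v ∈ I(r,n)}`. -/
abbrev ModelSpace (r n : ℕ) := AbsInv r n →₀ ℂ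

/-- `ζ_r = exp(2πi/r)`. -/
def zetaC (r : ℕ) : ℂ := Complex.exp (2 * Real.pi * Complex.I / r)

/-- `ζ_r` raised to an exponent in `ZMod r` (well defined since `ζ_r^r = 1`). -/
def zetaPow (r : ℕ) (a : ZMod r) : ℂ := zetaC r ^ a.val

/-- The Gelfand model operator `ϱ(g) C_v = ζ_r^{⟨g,v⟩} (−1)^{inv_v(g)} C_{|g|v|g|⁻¹}`. -/
def modelRho {r n : ℕ} (g : WreathG r n) :
    ModelSpace r n →ₗ[ℂ] ModelSpace r n :=
  Finsupp.lsum ℂ fun v =>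
    ((zetaPow r (WreathG.pairing g v.1) * (-1 : ℂ) ^ WreathG.invv v.1 g) •
      Finsupp.lsingle (⟨WreathG.aconj g.p v.1, v.2.aconj g.p⟩ : AbsInv r n))

/-- The auxiliary operator `φ(g) C_v = ζ_r^{⟨g,v⟩} C_{|g|v|g|⁻¹}`. -/
def modelPhi {r n : ℕ} (g : WreathG r n) :
    ModelSpace r n →ₗ[ℂ] ModelSpace r n :=
  Finsupp.lsum ℂ fun v =>
    ((zetaPow r (WreathG.pairing g v.1)) •
      Finsupp.lsingle (⟨WreathG.aconj g.p v.1, v.2.aconj g.p⟩ : AbsInv r n))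

/-- `(−1)` raised to an exponent in `ZMod 2`. -/
def negOnePow2 (a : ZMod 2) : ℂ := (-1 : ℂ) ^ a.val

/-- The Gelfand model operator for `B_n = G(2,n)`:
`ϱ(g) C_v = (−1)^{⟨g,v⟩} (−1)^{inv_v(g)} C_{|g|v|g|⁻¹}`. -/
def modelRho2 {n : ℕ} (g : WreathG 2 n) : ModelSpace 2 n →ₗ[ℂ] ModelSpace 2 n :=
  Finsupp.lsum ℂ fun v =>
    ((negOnePow2 (WreathG.pairing g v.1) * (-1 : ℂ) ^ WreathG.invv v.1 g) •
      Finsupp.lsingle (⟨WreathG.aconj g.p v.1, v.2.aconj g.p⟩ : AbsInv 2 n))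

/-- The auxiliary operator for `B_n = G(2,n)`: `φ(g) C_v = (−1)^{⟨g,v⟩} C_{|g|v|g|⁻¹}`. -/
def modelPhi2 {n : ℕ} (g : WreathG 2 n) : ModelSpace 2 n →ₗ[ℂ] ModelSpace 2 n :=
  Finsupp.lsum ℂ fun v =>
    ((negOnePow2 (WreathG.pairing g v.1)) •
      Finsupp.lsingle (⟨WreathG.aconj g.p v.1, v.2.aconj g.p⟩ : AbsInv 2 n))


open Equiv Finset

section AuxSign

variable {n : ℕ}

/-- sign equals signAux on `Fin n`. -/
lemma my_sign_eq_signAux (σ : Equiv.Perm (Fin n)) :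
    Equiv.Perm.sign σ = Equiv.Perm.signAux σ := by
  refine Equiv.Perm.swap_induction_on σ ?_ ?_
  · simp [Equiv.Perm.signAux_one]
  · intro f x y hxy ih
    rw [map_mul, Equiv.Perm.signAux_mul, ih, Equiv.Perm.sign_swap hxy,
      Equiv.Perm.signAux_swap hxy]

lemma my_signAux_eq_pow (σ : Equiv.Perm (Fin n)) :
    Equiv.Perm.signAux σ = (-1 : ℤˣ) ^
      Nat.card {q : Fin n × Fin n // q.1 < q.2 ∧ σ q.2 < σ q.1} := by
  unfold Equiv.Perm.signAux
  rw [Finset.prod_ite, Finset.prod_const, Finset.prod_const_one, mul_one]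
  congr 1
  rw [Nat.card_eq_fintype_card, Fintype.card_subtype]
  refine Finset.card_bij (fun x _ => ((x.2, x.1) : Fin n × Fin n)) ?_ ?_ ?_
  · rintro ⟨a, b⟩ hx
    rw [Finset.mem_filter] at hx ⊢
    obtain ⟨h1, h2⟩ := hx
    have hba : b < a := Equiv.Perm.mem_finPairsLT.1 h1
    refine ⟨Finset.mem_univ _, hba, lt_of_le_of_ne h2 ?_⟩
    intro h
    exact absurd (σ.injective h) (ne_of_lt hba).symm
  · rintro ⟨a, b⟩ _ ⟨c, d⟩ _ h
    simp only [Prod.mk.injEq] at h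
    exact Sigma.ext h.2 (heq_of_eq h.1)
  · rintro ⟨a, b⟩ hq
    rw [Finset.mem_filter] at hq
    obtain ⟨-, hab, hs⟩ := hq
    refine ⟨⟨b, a⟩, ?_, rfl⟩
    rw [Finset.mem_filter]
    exact ⟨Equiv.Perm.mem_finPairsLT.2 hab, le_of_lt hs⟩

end AuxSign


open Equiv Finset

section AuxPair

variable {n : ℕ} (τ : Equiv.Perm (Fin n))

/-- the "min of the τ-pair of σ(k)" map on the set of pair minima. -/
def pairMin (ττ : ∀ i, τ (τ i) = i) (hf : ∀ j, τ j ≠ j) (σ : Equiv.Perm (Fin n)) :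
    {i : Fin n // i < τ i} → {i : Fin n // i < τ i} := fun k =>
  if h : σ k.1 < τ (σ k.1) then ⟨σ k.1, h⟩
  else ⟨τ (σ k.1), by
    rw [ττ]
    exact lt_of_le_of_ne (not_lt.mp h) (hf _)⟩

lemma pairMin_pos (ττ : ∀ i, τ (τ i) = i) (hf : ∀ j, τ j ≠ j) (σ : Equiv.Perm (Fin n))
    (k : {i : Fin n // i < τ i}) (h : σ k.1 < τ (σ k.1)) :
    pairMin τ ττ hf σ k = ⟨σ k.1, h⟩ := dif_pos h

lemma pairMin_neg (ττ : ∀ i, τ (τ i) = i) (hf : ∀ j, τ j ≠ j) (σ : Equiv.Perm (Fin n))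
    (k : {i : Fin n // i < τ i}) (h : ¬ σ k.1 < τ (σ k.1)) :
    pairMin τ ττ hf σ k = ⟨τ (σ k.1), by
      rw [ττ]; exact lt_of_le_of_ne (not_lt.mp h) (hf _)⟩ := dif_neg h

lemma pairMin_pairMin (ττ : ∀ i, τ (τ i) = i) (hf : ∀ j, τ j ≠ j)
    (σ σ' : Equiv.Perm (Fin n)) (hinv : ∀ i, σ' (σ i) = i)
    (hc : ∀ i, σ' (τ i) = τ (σ' i)) (k : {i : Fin n // i < τ i}) :
    pairMin τ ττ hf σ' (pairMin τ ττ hf σ k) = k := by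
  obtain ⟨i, h⟩ := k
  by_cases hA : σ i < τ (σ i)
  · rw [pairMin_pos τ ττ hf σ ⟨i, h⟩ hA]
    rw [pairMin_pos τ ττ hf σ' ⟨σ i, hA⟩ (by show σ' (σ i) < _; rw [hinv]; exact h)]
    apply Subtype.ext
    exact hinv i
  · rw [pairMin_neg τ ττ hf σ ⟨i, h⟩ hA]
    have h1 : σ' (τ (σ i)) = τ i := by rw [hc, hinv]
    have h2 : ¬ σ' (τ (σ i)) < τ (σ' (τ (σ i))) := by
      rw [h1, ττ]
      exact not_lt.mpr (le_of_lt h)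
    rw [pairMin_neg τ ττ hf σ' _ h2]
    apply Subtype.ext
    show τ (σ' (τ (σ i))) = i
    rw [h1, ττ]

/-- The permutation induced by σ on the set of τ-pair minima. -/
def barPerm (ττ : ∀ i, τ (τ i) = i) (hf : ∀ j, τ j ≠ j) (σ : Equiv.Perm (Fin n))
    (hc : ∀ i, σ (τ i) = τ (σ i)) : Equiv.Perm {i : Fin n // i < τ i} where
  toFun := pairMin τ ττ hf σ
  invFun := pairMin τ ττ hf σ⁻¹
  left_inv := pairMin_pairMin τ ττ hf σ σ⁻¹ (fun i => σ.symm_apply_apply i)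
    (fun i => by
      have := hc (σ⁻¹ i)
      rw [show σ (σ⁻¹ i) = i from σ.apply_symm_apply i] at this
      rw [← this]; exact σ.symm_apply_apply _)
  right_inv := pairMin_pairMin τ ττ hf σ⁻¹ σ (fun i => σ.apply_symm_apply i) hc

/-- forward map of the pair equivalence -/
def pairTo (ττ : ∀ i, τ (τ i) = i) (hf : ∀ j, τ j ≠ j) (i : Fin n) :
    {i : Fin n // i < τ i} × Fin 2 :=
  if h : i < τ i then (⟨i, h⟩, 0)
  else (⟨τ i, by rw [ττ]; exact lt_of_le_of_ne (not_lt.mp h) (hf i)⟩, 1)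

/-- backward map of the pair equivalence -/
def pairFrom (p : {i : Fin n // i < τ i} × Fin 2) : Fin n :=
  if p.2 = 0 then p.1.1 else τ p.1.1

lemma pairTo_pos (ττ : ∀ i, τ (τ i) = i) (hf : ∀ j, τ j ≠ j) (i : Fin n) (h : i < τ i) :
    pairTo τ ττ hf i = (⟨i, h⟩, 0) := dif_pos h

lemma pairTo_neg (ττ : ∀ i, τ (τ i) = i) (hf : ∀ j, τ j ≠ j) (i : Fin n) (h : ¬ i < τ i) :
    pairTo τ ττ hf i =
      (⟨τ i, by rw [ττ]; exact lt_of_le_of_ne (not_lt.mp h) (hf i)⟩, 1) := dif_neg h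

lemma pairFrom_zero (k : {i : Fin n // i < τ i}) : pairFrom τ (k, 0) = k.1 := if_pos rfl

lemma pairFrom_one (k : {i : Fin n // i < τ i}) : pairFrom τ (k, 1) = τ k.1 :=
  if_neg (show ¬(1 : Fin 2) = 0 by decide)

/-- The key equivalence splitting `Fin n` into τ-pairs. -/
def pairEquiv (ττ : ∀ i, τ (τ i) = i) (hf : ∀ j, τ j ≠ j) :
    Fin n ≃ {i : Fin n // i < τ i} × Fin 2 where
  toFun := pairTo τ ττ hf
  invFun := pairFrom τ
  left_inv i := by
    by_cases h : i < τ i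
    · rw [pairTo_pos τ ττ hf i h, pairFrom_zero]
    · rw [pairTo_neg τ ττ hf i h, pairFrom_one, ττ]
  right_inv p := by
    obtain ⟨⟨i, h⟩, ε⟩ := p
    have hε : ε = 0 ∨ ε = 1 := by revert ε; decide
    rcases hε with rfl | rfl
    · rw [pairFrom_zero]
      exact pairTo_pos τ ττ hf i h
    · rw [pairFrom_one]
      rw [pairTo_neg τ ττ hf (τ i) (by rw [ττ]; exact not_lt.mpr (le_of_lt h))]
      refine Prod.ext (Subtype.ext ?_) rfl
      show τ (τ i) = i
      rw [ττ]

lemma pairEquiv_pos (ττ : ∀ i, τ (τ i) = i) (hf : ∀ j, τ j ≠ j) (i : Fin n) (h : i < τ i) :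
    pairEquiv τ ττ hf i = (⟨i, h⟩, 0) := pairTo_pos τ ττ hf i h

lemma pairEquiv_neg (ττ : ∀ i, τ (τ i) = i) (hf : ∀ j, τ j ≠ j) (i : Fin n) (h : ¬ i < τ i) :
    pairEquiv τ ττ hf i =
      (⟨τ i, by rw [ττ]; exact lt_of_le_of_ne (not_lt.mp h) (hf i)⟩, 1) := pairTo_neg τ ττ hf i h

lemma pairEquiv_symm_zero (ττ : ∀ i, τ (τ i) = i) (hf : ∀ j, τ j ≠ j)
    (k : {i : Fin n // i < τ i}) :
    (pairEquiv τ ττ hf).symm (k, 0) = k.1 := pairFrom_zero τ k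

lemma pairEquiv_symm_one (ττ : ∀ i, τ (τ i) = i) (hf : ∀ j, τ j ≠ j)
    (k : {i : Fin n // i < τ i}) :
    (pairEquiv τ ττ hf).symm (k, 1) = τ k.1 := pairFrom_one τ k

lemma sign_eq_pow_invv_aux (σ : Equiv.Perm (Fin n))
    (ττ : ∀ i, τ (τ i) = i) (hf : ∀ j, τ j ≠ j) (hc : ∀ i, σ (τ i) = τ (σ i)) :
    Equiv.Perm.sign σ = (-1 : ℤˣ) ^
      Nat.card {q : Fin n × Fin n // q.1 < q.2 ∧ τ q.1 = q.2 ∧ σ q.2 < σ q.1} := by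
  classical
  set M := {i : Fin n // i < τ i}
  set e := pairEquiv τ ττ hf with he
  set bar := barPerm τ ττ hf σ hc with hbar
  set A : Equiv.Perm (M × Fin 2) :=
    Equiv.prodCongrRight (fun k : M => if τ (σ k.1) < σ k.1 then Equiv.swap (0 : Fin 2) 1 else 1)
    with hA
  set B : Equiv.Perm (M × Fin 2) := Equiv.prodCongrLeft (fun _ : Fin 2 => bar) with hB
  have key : e.permCongr σ = B * A := by
    apply Equiv.ext
    rintro ⟨⟨i, h⟩, ε⟩
    have hne := hf (σ i)
    have hστ : σ (τ i) = τ (σ i) := hc i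
    have hε : ε = 0 ∨ ε = 1 := by revert ε; decide
    rw [Equiv.permCongr_apply, Equiv.Perm.mul_apply]
    rcases lt_or_gt_of_ne hne with hlt | hgt
    · -- τ (σ i) < σ i : reversed pair
      have hA1 : ∀ ε' : Fin 2, A (⟨i, h⟩, ε') = (⟨i, h⟩, Equiv.swap (0 : Fin 2) 1 ε') := by
        intro ε'
        rw [hA, Equiv.prodCongrRight_apply, if_pos hlt]
      have hbark : bar ⟨i, h⟩ = ⟨τ (σ i), by rw [ττ]; exact hlt⟩ := by
        rw [hbar]
        exact pairMin_neg τ ττ hf σ ⟨i, h⟩ (not_lt.mpr (le_of_lt hlt))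
      rcases hε with rfl | rfl
      · rw [hA1 0, Equiv.swap_apply_left, hB, Equiv.prodCongrLeft_apply, hbark, he,
          pairEquiv_symm_zero]
        show pairEquiv τ ττ hf (σ i) = _
        rw [pairEquiv_neg τ ττ hf (σ i) (not_lt.mpr (le_of_lt hlt))]
      · rw [hA1 1, Equiv.swap_apply_right, hB, Equiv.prodCongrLeft_apply, hbark, he,
          pairEquiv_symm_one]
        show pairEquiv τ ττ hf (σ (τ i)) = _
        rw [hστ, pairEquiv_pos τ ττ hf (τ (σ i)) (by rw [ττ]; exact hlt)]
    · -- σ i < τ (σ i) : non-reversed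
      have hA1 : ∀ ε' : Fin 2, A (⟨i, h⟩, ε') = (⟨i, h⟩, ε') := by
        intro ε'
        rw [hA, Equiv.prodCongrRight_apply, if_neg (not_lt.mpr (le_of_lt hgt))]
        rfl
      have hbark : bar ⟨i, h⟩ = ⟨σ i, hgt⟩ := by
        rw [hbar]
        exact pairMin_pos τ ττ hf σ ⟨i, h⟩ hgt
      rcases hε with rfl | rfl
      · rw [hA1 0, hB, Equiv.prodCongrLeft_apply, hbark, he, pairEquiv_symm_zero]
        show pairEquiv τ ττ hf (σ i) = _
        rw [pairEquiv_pos τ ττ hf (σ i) hgt]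
      · rw [hA1 1, hB, Equiv.prodCongrLeft_apply, hbark, he, pairEquiv_symm_one]
        show pairEquiv τ ττ hf (σ (τ i)) = _
        rw [hστ, pairEquiv_neg τ ττ hf (τ (σ i)) (by rw [ττ]; exact not_lt.mpr (le_of_lt hgt))]
        refine Prod.ext (Subtype.ext ?_) rfl
        show τ (τ (σ i)) = σ i
        rw [ττ]
  have hsign : Equiv.Perm.sign σ = Equiv.Perm.sign B * Equiv.Perm.sign A := by
    rw [← map_mul, ← key, Equiv.Perm.sign_permCongr]
  have hsignB : Equiv.Perm.sign B = 1 := by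
    rw [hB, Equiv.Perm.sign_prodCongrLeft, Finset.prod_const, Finset.card_univ,
      Fintype.card_fin]
    exact Int.units_sq _
  have hsignA : Equiv.Perm.sign A =
      (-1 : ℤˣ) ^ (Finset.univ.filter fun k : M => τ (σ k.1) < σ k.1).card := by
    rw [hA, Equiv.Perm.sign_prodCongrRight]
    have h1 : ∀ k : M, Equiv.Perm.sign (if τ (σ k.1) < σ k.1 then Equiv.swap (0 : Fin 2) 1 else 1)
        = if τ (σ k.1) < σ k.1 then (-1 : ℤˣ) else 1 := by
      intro k
      by_cases hk : τ (σ k.1) < σ k.1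
      · rw [if_pos hk, if_pos hk, Equiv.Perm.sign_swap (by decide)]
      · rw [if_neg hk, if_neg hk, map_one]
    rw [Finset.prod_congr rfl (fun k _ => h1 k), Finset.prod_ite, Finset.prod_const,
      Finset.prod_const_one, mul_one]
  have hcard : Nat.card {q : Fin n × Fin n // q.1 < q.2 ∧ τ q.1 = q.2 ∧ σ q.2 < σ q.1}
      = (Finset.univ.filter fun k : M => τ (σ k.1) < σ k.1).card := by
    have EE : {q : Fin n × Fin n // q.1 < q.2 ∧ τ q.1 = q.2 ∧ σ q.2 < σ q.1}
        ≃ {k : M // τ (σ k.1) < σ k.1} :=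
      { toFun := fun q => ⟨⟨q.1.1, by rw [q.2.2.1]; exact q.2.1⟩, by
          have h2 := q.2.2.2
          rw [← q.2.2.1, hc] at h2
          exact h2⟩
        invFun := fun k => ⟨(k.1.1, τ k.1.1), k.1.2, rfl, by
          show σ (τ k.1.1) < σ k.1.1
          rw [hc]
          exact k.2⟩
        left_inv := fun q => by
          apply Subtype.ext
          exact Prod.ext rfl q.2.2.1
        right_inv := fun k => by
          apply Subtype.ext
          apply Subtype.ext
          rfl }
    rw [Nat.card_congr EE, Nat.card_eq_fintype_card, Fintype.card_subtype]
  rw [hsign, hsignB, hsignA, one_mul, hcard]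

end AuxPair

/-- On the `S_{2m}`-conjugacy class `c = c_{0,0,p₀,p₁}` of fixed-point-free
involutions of `B_{2m}` with `2p₀` zero-colored entries, the character of `ϱ` equals
`(−1)^{inv(|g|)}` times the character of `φ`. -/
theorem rho_char_eq_sign_mul_phi_char_B (m p₀ p₁ : ℕ) (hm : 1 ≤ m) (hs : p₀ + p₁ = m)
    (g : WreathG 2 (2 * m)) :
    ∑ v ∈ Finset.univ.filter (fun v : AbsInv 2 (2 * m) =>
        (∀ j, v.1.p j ≠ j) ∧
        (Finset.univ.filter fun i => v.1.z i = 0).card = 2 * p₀ ∧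
        WreathG.aconj g.p v.1 = v.1),
      negOnePow2 (WreathG.pairing g v.1) * (-1 : ℂ) ^ WreathG.invv v.1 g
    = (-1 : ℂ) ^ WreathG.invPerm g.p *
      ∑ v ∈ Finset.univ.filter (fun v : AbsInv 2 (2 * m) =>
        (∀ j, v.1.p j ≠ j) ∧
        (Finset.univ.filter fun i => v.1.z i = 0).card = 2 * p₀ ∧
        WreathG.aconj g.p v.1 = v.1),
      negOnePow2 (WreathG.pairing g v.1) := by
  rw [Finset.mul_sum]
  apply Finset.sum_congr rfl
  intro v hv
  rw [Finset.mem_filter] at hv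
  obtain ⟨-, hfpf, -, haconj⟩ := hv
  have h2 : ∀ i, v.1.p (v.1.p i) = i := by
    intro i
    have hsq := v.2.1
    rw [sq] at hsq
    calc v.1.p (v.1.p i) = (v.1.p * v.1.p) i := rfl
    _ = i := by rw [hsq]; rfl
  have hcomm : ∀ i, g.p (v.1.p i) = v.1.p (g.p i) := by
    intro i
    have hp : g.p * v.1.p * g.p⁻¹ = v.1.p := congrArg WreathG.p haconj
    have hp2 : g.p * v.1.p = v.1.p * g.p := mul_inv_eq_iff_eq_mul.mp hp
    calc g.p (v.1.p i) = (g.p * v.1.p) i := rfl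
    _ = (v.1.p * g.p) i := by rw [hp2]
    _ = v.1.p (g.p i) := rfl
  have hZ : (-1 : ℤˣ) ^ WreathG.invv v.1 g = (-1 : ℤˣ) ^ WreathG.invPerm g.p := by
    have e1 := sign_eq_pow_invv_aux v.1.p g.p h2 hfpf hcomm
    have e2 := my_sign_eq_signAux g.p
    have e3 := my_signAux_eq_pow g.p
    unfold WreathG.invv WreathG.invPerm
    rw [← e1, e2, e3]
  have hC : ((-1 : ℂ)) ^ WreathG.invv v.1 g = (-1 : ℂ) ^ WreathG.invPerm g.p := by
    have h4 := congrArg (fun u : ℤˣ => ((u : ℤ) : ℂ)) hZ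
    push_cast at h4
    exact h4
  rw [hC, mul_comm]
end
end

section
/- Fix r ≥ 1, m ≥ 1 and p_0,…,p_{r−1} ∈ ℕ with p_0 + ⋯ + p_{r−1} = m, and let c = {v ∈ I(r,2m) : |v| is fixed-point-free and #{i : z_i(v) = j} = 2p_j for every j ∈ {0,…,r−1}} (the S_{2m}-conjugacy class of absolute involutions of G(r,2m) with no fixed points and prescribed color multiplicities). Then for every g ∈ G(r,2m): Σ_{v ∈ c, |g|v|g|⁻¹ = v} ζ_r^{⟨g,v⟩}·(−1)^{inv_v(g)} = (−1)^{inv(|g|)} · Σ_{v ∈ c, |g|v|g|⁻¹ = v} ζ_r^{⟨g,v⟩}. (This is the character identity expressing that the representation ϱ of G(r,2m) on the span of {C_v : v ∈ c} is isomorphic to the tensor product of the linear character g ↦ (−1)^{inv(|g|)} with the representation φ on the same span.) -/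
noncomputable section

section AuxSign


-- sign of a permutation with no flips relative to a commuting fixed-point-free involution
lemma sign_eq_one_of_noflip {n : ℕ} (σ τ : Equiv.Perm (Fin n))
    (hτ : ∀ x, τ (τ x) = x) (hfpf : ∀ x, τ x ≠ x)
    (hc : ∀ x, σ (τ x) = τ (σ x))
    (hnf : ∀ x, x < τ x → σ x < σ (τ x)) :
    Equiv.Perm.sign σ = 1 := by
  have hmono : ∀ x, ¬ x < τ x → σ (τ x) < σ x := by
    intro x hx
    have h1 : τ x < x := lt_of_le_of_ne (not_lt.mp hx) (hfpf x)
    have := hnf (τ x) (by rw [hτ]; exact h1)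
    rwa [hτ] at this
  have hp : ∀ x, x < τ x ↔ σ x < τ (σ x) := by
    intro x
    constructor
    · intro h; rw [← hc]; exact hnf x h
    · intro h; by_contra hx
      have := hmono x hx
      rw [hc] at this
      exact absurd (this.trans h) (lt_irrefl _)
  set A := {i : Fin n // i < τ i} with hA
  let π : Equiv.Perm A := σ.subtypePerm (fun x => (hp x).symm)
  let e : Fin n ≃ A ⊕ A :=
    { toFun := fun i => if h : i < τ i then Sum.inl ⟨i, h⟩ else
        Sum.inr ⟨τ i, by rw [hτ]; exact lt_of_le_of_ne (not_lt.mp h) (hfpf i)⟩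
      invFun := fun x => Sum.rec (fun a => a.1) (fun a => τ a.1) x
      left_inv := by
        intro i
        by_cases h : i < τ i
        · simp [h]
        · simp [h, hτ]
      right_inv := by
        rintro (⟨a, ha⟩ | ⟨a, ha⟩)
        · simp [ha]
        · have : ¬ τ a < τ (τ a) := by rw [hτ]; exact not_lt.mpr ha.le
          simp only [this, dif_neg, not_false_iff]
          congr 1
          exact Subtype.ext (hτ a) }
  have key : Equiv.Perm.sign σ = Equiv.Perm.sign (Equiv.sumCongr π π) := by
    refine Equiv.Perm.sign_eq_sign_of_equiv σ (Equiv.sumCongr π π) e ?_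
    intro x
    by_cases h : x < τ x
    · have hσ : σ x < τ (σ x) := (hp x).mp h
      simp only [e, Equiv.coe_fn_mk, dif_pos h, dif_pos hσ, Equiv.sumCongr_apply, Sum.map_inl]
      rfl
    · have hσ : ¬ σ x < τ (σ x) := fun hh => h ((hp x).mpr hh)
      simp only [e, Equiv.coe_fn_mk, dif_neg h, dif_neg hσ, Equiv.sumCongr_apply, Sum.map_inr]
      congr 1
      rw [Equiv.Perm.subtypePerm_apply]
      exact Subtype.ext (hc x).symm
  rw [key, Equiv.Perm.sign_sumCongr]
  exact Int.units_mul_self _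

-- sign σ = (-1)^(number of flipped pairs of τ)
lemma sign_eq_neg_one_pow_flips {n : ℕ} :
    ∀ (k : ℕ) (σ τ : Equiv.Perm (Fin n)), (∀ x, τ (τ x) = x) → (∀ x, τ x ≠ x) →
    (∀ x, σ (τ x) = τ (σ x)) →
    (Finset.univ.filter fun i : Fin n => i < τ i ∧ σ (τ i) < σ i).card = k →
    Equiv.Perm.sign σ = (-1 : ℤˣ) ^ k := by
  intro k
  induction k with
  | zero =>
    intro σ τ hτ hfpf hc hcard
    rw [pow_zero]
    refine sign_eq_one_of_noflip σ τ hτ hfpf hc ?_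
    intro x hx
    by_contra hlt
    have hmem : x ∈ Finset.univ.filter fun i : Fin n => i < τ i ∧ σ (τ i) < σ i := by
      refine Finset.mem_filter.mpr ⟨Finset.mem_univ _, hx, ?_⟩
      exact lt_of_le_of_ne (not_lt.mp hlt) (fun h => hfpf x (σ.injective h))
    rw [Finset.card_eq_zero] at hcard
    simp [hcard] at hmem
  | succ k ih =>
    intro σ τ hτ hfpf hc hcard
    have hne : (Finset.univ.filter fun i : Fin n => i < τ i ∧ σ (τ i) < σ i).Nonempty := by
      rw [← Finset.card_pos, hcard]; exact Nat.succ_pos k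
    obtain ⟨a, ha⟩ := hne
    rw [Finset.mem_filter] at ha
    obtain ⟨-, hab, hflip⟩ := ha
    have hab' : a ≠ τ a := fun h => absurd h.symm (hfpf a)
    have hσab : σ a ≠ σ (τ a) := fun h => hab' (σ.injective h)
    have h1 : τ (σ a) = σ (τ a) := (hc a).symm
    have h2 : τ (σ (τ a)) = σ a := by rw [← hc (τ a), hτ]
    have hswapcomm : ∀ y, Equiv.swap (σ a) (σ (τ a)) (τ y)
        = τ (Equiv.swap (σ a) (σ (τ a)) y) := by
      intro y
      by_cases hy1 : y = σ a
      · subst hy1; rw [h1, Equiv.swap_apply_left, h2, Equiv.swap_apply_right]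
      · by_cases hy2 : y = σ (τ a)
        · subst hy2; rw [h2, Equiv.swap_apply_right, h1, Equiv.swap_apply_left]
        · have ht1 : τ y ≠ σ a := fun h => hy2 (by rw [← hτ y, h, h1])
          have ht2 : τ y ≠ σ (τ a) := fun h => hy1 (by rw [← hτ y, h, h2])
          rw [Equiv.swap_apply_of_ne_of_ne hy1 hy2, Equiv.swap_apply_of_ne_of_ne ht1 ht2]
    have hc₁ : ∀ x, (Equiv.swap (σ a) (σ (τ a)) * σ) (τ x)
        = τ ((Equiv.swap (σ a) (σ (τ a)) * σ) x) := by
      intro x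
      simp only [Equiv.Perm.mul_apply]
      rw [hc x]
      exact hswapcomm (σ x)
    have hfix : ∀ x, x ≠ a → x ≠ τ a → (Equiv.swap (σ a) (σ (τ a)) * σ) x = σ x := by
      intro x hx1 hx2
      simp only [Equiv.Perm.mul_apply]
      exact Equiv.swap_apply_of_ne_of_ne (fun h => hx1 (σ.injective h))
        (fun h => hx2 (σ.injective h))
    have hσ₁a : (Equiv.swap (σ a) (σ (τ a)) * σ) a = σ (τ a) := by
      simp [Equiv.Perm.mul_apply]
    have hσ₁b : (Equiv.swap (σ a) (σ (τ a)) * σ) (τ a) = σ a := by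
      simp [Equiv.Perm.mul_apply]
    have hfilter : (Finset.univ.filter fun i : Fin n => i < τ i ∧
          (Equiv.swap (σ a) (σ (τ a)) * σ) (τ i) < (Equiv.swap (σ a) (σ (τ a)) * σ) i)
        = (Finset.univ.filter fun i : Fin n => i < τ i ∧ σ (τ i) < σ i).erase a := by
      ext i
      simp only [Finset.mem_filter, Finset.mem_erase, Finset.mem_univ, true_and]
      constructor
      · rintro ⟨hi1, hi2⟩
        by_cases hia : i = a
        · subst hia
          rw [hσ₁a, hσ₁b] at hi2
          exact absurd (hi2.trans hflip) (lt_irrefl _)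
        · by_cases hib : i = τ a
          · subst hib
            rw [hτ] at hi1
            exact absurd (hab.trans hi1) (lt_irrefl _)
          · have hti_a : τ i ≠ a := fun h => hib (by rw [← hτ i, h])
            have hti_b : τ i ≠ τ a := fun h => hia (τ.injective h)
            rw [hfix i hia hib, hfix (τ i) hti_a hti_b] at hi2
            exact ⟨hia, hi1, hi2⟩
      · rintro ⟨hia, hi1, hi2⟩
        by_cases hib : i = τ a
        · subst hib
          rw [hτ] at hi1
          exact absurd (hab.trans hi1) (lt_irrefl _)
        · have hti_a : τ i ≠ a := fun h => hib (by rw [← hτ i, h])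
          have hti_b : τ i ≠ τ a := fun h => hia (τ.injective h)
          rw [hfix i hia hib, hfix (τ i) hti_a hti_b]
          exact ⟨hi1, hi2⟩
    have hcard₁ : (Finset.univ.filter fun i : Fin n => i < τ i ∧
          (Equiv.swap (σ a) (σ (τ a)) * σ) (τ i) < (Equiv.swap (σ a) (σ (τ a)) * σ) i).card
        = k := by
      rw [hfilter, Finset.card_erase_of_mem, hcard]
      · rfl
      · exact Finset.mem_filter.mpr ⟨Finset.mem_univ _, hab, hflip⟩
    have hsign₁ := ih (Equiv.swap (σ a) (σ (τ a)) * σ) τ hτ hfpf hc₁ hcard₁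
    rw [Equiv.Perm.sign_mul, Equiv.Perm.sign_swap hσab, neg_one_mul] at hsign₁
    rw [pow_succ, ← neg_neg (Equiv.Perm.sign σ), hsign₁]
    simp

lemma sign_eq_neg_one_pow_inversions {n : ℕ} (hn : 2 ≤ n) (σ : Equiv.Perm (Fin n)) :
    Equiv.Perm.sign σ =
      (-1 : ℤˣ) ^ (Finset.univ.filter fun q : Fin n × Fin n =>
        q.1 < q.2 ∧ σ q.2 < σ q.1).card := by
  have hsurj : Function.Surjective (MonoidHom.mk' (@Equiv.Perm.signAux n)
      Equiv.Perm.signAux_mul) := by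
    intro u
    rcases Int.units_eq_one_or u with rfl | rfl
    · exact ⟨1, Equiv.Perm.signAux_one n⟩
    · have hxy : (⟨0, by omega⟩ : Fin n) ≠ ⟨1, by omega⟩ := by
        intro h; simpa using congrArg Fin.val h
      exact ⟨Equiv.swap _ _, Equiv.Perm.signAux_swap hxy⟩
  have hsign : Equiv.Perm.sign σ = Equiv.Perm.signAux σ := by
    rw [← Equiv.Perm.eq_sign_of_surjective_hom hsurj]; rfl
  have hprod : Equiv.Perm.signAux σ =
      (-1 : ℤˣ) ^ ((Equiv.Perm.finPairsLT n).filter fun x => σ x.1 ≤ σ x.2).card := by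
    unfold Equiv.Perm.signAux
    rw [Finset.prod_ite, Finset.prod_const, Finset.prod_const, one_pow, mul_one]
  have hcard : (Finset.univ.filter fun q : Fin n × Fin n =>
        q.1 < q.2 ∧ σ q.2 < σ q.1).card
      = ((Equiv.Perm.finPairsLT n).filter fun x => σ x.1 ≤ σ x.2).card := by
    refine Finset.card_bij (fun q _ => ⟨q.2, q.1⟩) ?_ ?_ ?_
    · intro q hq
      rw [Finset.mem_filter] at hq ⊢
      obtain ⟨-, h1, h2⟩ := hq
      exact ⟨Equiv.Perm.mem_finPairsLT.mpr h1, h2.le⟩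
    · intro q hq q' hq' h
      obtain ⟨h1, h2⟩ := Sigma.mk.inj_iff.mp h
      exact Prod.ext (eq_of_heq h2) h1
    · rintro ⟨b1, b2⟩ hb
      rw [Finset.mem_filter] at hb
      obtain ⟨hmem, hle⟩ := hb
      have hlt : b2 < b1 := Equiv.Perm.mem_finPairsLT.mp hmem
      refine ⟨(b2, b1), ?_, rfl⟩
      rw [Finset.mem_filter]
      exact ⟨Finset.mem_univ _, hlt,
        lt_of_le_of_ne hle (fun h => hlt.ne' (σ.injective h))⟩
  rw [hsign, hprod, hcard]

end AuxSign

/-- On the `S_{2m}`-conjugacy class of fixed-point-free absolute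
involutions of `G(r,2m)` with `2p_j` entries of color `j` for each `j`, the character of
`ϱ` equals `(−1)^{inv(|g|)}` times the character of `φ`. -/
theorem rho_char_eq_sign_mul_phi_char (r m : ℕ) [NeZero r] (hm : 1 ≤ m)
    (p : Fin r → ℕ) (hp : ∑ j, p j = m) (g : WreathG r (2 * m)) :
    ∑ v ∈ Finset.univ.filter (fun v : AbsInv r (2 * m) =>
        (∀ j, v.1.p j ≠ j) ∧
        (∀ j : Fin r,
          (Finset.univ.filter fun i => v.1.z i = (j.val : ZMod r)).card = 2 * p j) ∧
        WreathG.aconj g.p v.1 = v.1),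
      zetaPow r (WreathG.pairing g v.1) * (-1 : ℂ) ^ WreathG.invv v.1 g
    = (-1 : ℂ) ^ WreathG.invPerm g.p *
      ∑ v ∈ Finset.univ.filter (fun v : AbsInv r (2 * m) =>
        (∀ j, v.1.p j ≠ j) ∧
        (∀ j : Fin r,
          (Finset.univ.filter fun i => v.1.z i = (j.val : ZMod r)).card = 2 * p j) ∧
        WreathG.aconj g.p v.1 = v.1),
      zetaPow r (WreathG.pairing g v.1) := by
  classical
  rw [Finset.mul_sum]
  refine Finset.sum_congr rfl fun v hv => ?_
  rw [Finset.mem_filter] at hv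
  obtain ⟨-, hfpf, -, hconj⟩ := hv
  set σ := g.p with hσdef
  set τ := v.1.p with hτdef
  have hττ : τ * τ = 1 := by rw [← sq]; exact v.2.1
  have hτ : ∀ x, τ (τ x) = x := by
    intro x
    have := Equiv.ext_iff.mp hττ x
    simpa [Equiv.Perm.mul_apply] using this
  have hpconj : σ * τ * σ⁻¹ = τ := congrArg WreathG.p hconj
  have hcomm : σ * τ = τ * σ := mul_inv_eq_iff_eq_mul.mp hpconj
  have hc : ∀ x, σ (τ x) = τ (σ x) := by
    intro x
    have := Equiv.ext_iff.mp hcomm x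
    simpa [Equiv.Perm.mul_apply] using this
  have hn : 2 ≤ 2 * m := by omega
  have hinvv : WreathG.invv v.1 g
      = (Finset.univ.filter fun i : Fin (2 * m) => i < τ i ∧ σ (τ i) < σ i).card := by
    rw [WreathG.invv, Nat.card_eq_fintype_card, Fintype.card_subtype]
    refine Finset.card_bij (fun q _ => q.1) ?_ ?_ ?_
    · intro q hq
      rw [Finset.mem_filter] at hq ⊢
      obtain ⟨-, h1, h2, h3⟩ := hq
      rw [← hσdef, ← hτdef] at *
      refine ⟨Finset.mem_univ _, ?_, ?_⟩
      · rw [h2]; exact h1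
      · rw [h2]; exact h3
    · intro q hq q' hq' h
      rw [Finset.mem_filter] at hq hq'
      have e1 : q.2 = τ q.1 := hq.2.2.1.symm
      have e2 : q'.2 = τ q'.1 := hq'.2.2.1.symm
      have h' : q.1 = q'.1 := h
      exact Prod.ext h' (by rw [e1, e2, h'])
    · intro i hi
      rw [Finset.mem_filter] at hi
      obtain ⟨-, h1, h2⟩ := hi
      exact ⟨(i, τ i), Finset.mem_filter.mpr ⟨Finset.mem_univ _, h1, rfl, h2⟩, rfl⟩
  have hinvPerm : WreathG.invPerm σ
      = (Finset.univ.filter fun q : Fin (2 * m) × Fin (2 * m) =>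
          q.1 < q.2 ∧ σ q.2 < σ q.1).card := by
    rw [WreathG.invPerm, Nat.card_eq_fintype_card, Fintype.card_subtype]
  have hu : (-1 : ℤˣ) ^ WreathG.invv v.1 g = (-1 : ℤˣ) ^ WreathG.invPerm σ := by
    rw [hinvv, hinvPerm, ← sign_eq_neg_one_pow_flips _ σ τ hτ hfpf hc rfl,
      ← sign_eq_neg_one_pow_inversions hn σ]
  have hpow : ((-1 : ℂ) ^ WreathG.invv v.1 g) = (-1 : ℂ) ^ WreathG.invPerm σ := by
    rcases Nat.even_or_odd (WreathG.invv v.1 g) with hA | hA <;>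
      rcases Nat.even_or_odd (WreathG.invPerm σ) with hB | hB
    · rw [hA.neg_one_pow, hB.neg_one_pow]
    · rw [hA.neg_one_pow, hB.neg_one_pow] at hu ⊢
      exact absurd hu (by decide)
    · rw [hA.neg_one_pow, hB.neg_one_pow] at hu ⊢
      exact absurd hu (by decide)
    · rw [hA.neg_one_pow, hB.neg_one_pow]
  rw [hpow]
  ring
end
end

section
/- Fix r ≥ 1, m ≥ 1 and p_0,…,p_{r−1} ∈ ℕ with p_0 + ⋯ + p_{r−1} = m. Let (S_0,…,S_{r−1}) be pairwise disjoint subsets of Fin 2m with union Fin 2m and |S_j| = 2p_j for every j, let Δ_{S_0,…,S_{r−1}} = {v ∈ I(r,2m) : |v| is fixed-point-free and {i : z_i(v) = j} = S_j for every j}, and let C_{S_0,…,S_{r−1}} = Σ_{v ∈ Δ_{S_0,…,S_{r−1}}} C_v ∈ M. If g ∈ G(r,2m) satisfies |g|(S_j) = S_j for every j ∈ {0,…,r−1}, then C_{S_0,…,S_{r−1}} is an eigenvector of φ(g): φ(g) C_{S_0,…,S_{r−1}} = ζ_r^{e(g)} C_{S_0,…,S_{r−1}}, where e(g) = Σ_{j=0}^{r−1}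 j·(Σ_{i ∈ S_j} z_i(g)) ∈ ZMod r. -/
noncomputable section

/-- `Δ_{S_0,…,S_{r−1}}`: the set of absolute involutions of `G(r,2m)` whose underlying
permutation is fixed-point-free and whose set of `j`-colored positions is exactly `S j`. -/
def DeltaT {r m : ℕ} [NeZero r] (S : Fin r → Finset (Fin (2 * m))) :
    Finset (AbsInv r (2 * m)) :=
  Finset.univ.filter fun v =>
    (∀ j, v.1.p j ≠ j) ∧
    ∀ j : Fin r, (Finset.univ.filter fun i => v.1.z i = (j.val : ZMod r)) = S j

/-- `C_{S_0,…,S_{r−1}} = ∑_{v ∈ Δ_{S_0,…,S_{r−1}}} C_v`. -/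
def CT {r m : ℕ} [NeZero r] (S : Fin r → Finset (Fin (2 * m))) : ModelSpace r (2 * m) :=
  ∑ v ∈ DeltaT S, Finsupp.single v 1

/-- Auxiliary: `aconj` by a permutation stabilizing each block preserves `DeltaT`. -/
theorem aconj_mem_DeltaT {r m : ℕ} [NeZero r] (S : Fin r → Finset (Fin (2 * m)))
    (τ : Equiv.Perm (Fin (2 * m))) (hτ : ∀ j, (S j).image τ = S j)
    (v : AbsInv r (2 * m)) (hv : v ∈ DeltaT S) :
    (⟨WreathG.aconj τ v.1, v.2.aconj τ⟩ : AbsInv r (2 * m)) ∈ DeltaT S := by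
  simp only [DeltaT, Finset.mem_filter, Finset.mem_univ, true_and] at hv ⊢
  obtain ⟨h1, h2⟩ := hv
  refine ⟨fun j hj => ?_, fun j => ?_⟩
  · have : v.1.p (τ.symm j) = τ.symm j := by
      have : τ (v.1.p (τ.symm j)) = j := hj
      have := congrArg τ.symm this
      simpa using this
    exact h1 _ this
  · ext i
    simp only [Finset.mem_filter, Finset.mem_univ, true_and, WreathG.aconj]
    have : τ.symm i ∈ S j ↔ i ∈ S j := by
      conv_rhs => rw [← hτ j]
      simp only [Finset.mem_image]
      constructor
      · intro h; exact ⟨τ.symm i, h, by simp⟩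
      · rintro ⟨a, ha, rfl⟩; simpa using ha
    rw [← this, ← h2 j]
    simp
    exact Finset.mem_filter.trans (and_iff_right (Finset.mem_univ _))
theorem CT_eigenvector' (r m : ℕ) [NeZero r]
    (S : Fin r → Finset (Fin (2 * m)))
    (g : WreathG r (2 * m)) (hg : ∀ j, (S j).image g.p = S j) :
    modelPhi g (CT S) =
      zetaPow r (∑ j : Fin r, (j.val : ZMod r) * ∑ i ∈ S j, g.z i) • CT S := by
  classical
  -- pairing value is constant on DeltaT S
  have hpair : ∀ v ∈ DeltaT S,
      WreathG.pairing g v.1 = ∑ j : Fin r, (j.val : ZMod r) * ∑ i ∈ S j, g.z i := by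
    intro v hv
    simp only [DeltaT, Finset.mem_filter, Finset.mem_univ, true_and] at hv
    obtain ⟨-, h2⟩ := hv
    have hr : 0 < r := Nat.pos_of_ne_zero (NeZero.ne r)
    set c : Fin (2 * m) → Fin r := fun i => ⟨(v.1.z i).val, ZMod.val_lt _⟩ with hc
    have hfib : ∀ j : Fin r, (Finset.univ.filter fun i => c i = j) = S j := by
      intro j
      rw [← h2 j]
      apply Finset.filter_congr
      intro i _
      constructor
      · intro h
        have : (v.1.z i).val = j.val := congrArg Fin.val h
        rw [← this, ZMod.natCast_val, ZMod.cast_id]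
      · intro h
        apply Fin.ext
        show (v.1.z i).val = j.val
        rw [h, ZMod.val_natCast_of_lt j.isLt]
    have key : ∀ j : Fin r, ∀ i ∈ S j, v.1.z i = (j.val : ZMod r) := by
      intro j i hi
      rw [← h2 j] at hi
      exact (Finset.mem_filter.mp hi).2
    unfold WreathG.pairing
    rw [← Finset.sum_fiberwise Finset.univ c (fun i => g.z i * v.1.z i)]
    apply Finset.sum_congr rfl
    intro j _
    rw [hfib j, Finset.mul_sum]
    apply Finset.sum_congr rfl
    intro i hi
    rw [key j i hi, mul_comm]
  unfold CT
  rw [map_sum, Finset.smul_sum]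
  have hstep : ∀ v : AbsInv r (2 * m), v ∈ DeltaT S →
      modelPhi g (Finsupp.single v 1) =
        zetaPow r (∑ j : Fin r, (j.val : ZMod r) * ∑ i ∈ S j, g.z i) •
          Finsupp.single (⟨WreathG.aconj g.p v.1, v.2.aconj g.p⟩ : AbsInv r (2 * m)) 1 := by
    intro v hv
    rw [modelPhi, Finsupp.lsum_single, ← hpair v hv]
    simp [Finsupp.smul_single]
  rw [Finset.sum_congr rfl hstep]
  -- reindex
  have hginv : ∀ j, (S j).image (g.p⁻¹ : Equiv.Perm (Fin (2 * m))) = S j := by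
    intro j
    conv_lhs => rw [← hg j]
    rw [Finset.image_image]
    have : ((g.p⁻¹ : Equiv.Perm (Fin (2 * m))) : Fin (2*m) → Fin (2*m)) ∘ g.p = id := by
      funext x; simp
    rw [this, Finset.image_id]
  refine Finset.sum_nbij' (fun v => (⟨WreathG.aconj g.p v.1, v.2.aconj g.p⟩ : AbsInv r (2 * m)))
    (fun v => (⟨WreathG.aconj g.p⁻¹ v.1, v.2.aconj g.p⁻¹⟩ : AbsInv r (2 * m)))
    (fun v hv => aconj_mem_DeltaT S g.p hg v hv)
    (fun v hv => aconj_mem_DeltaT S g.p⁻¹ hginv v hv) ?_ ?_ ?_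
  · intro v hv
    apply Subtype.ext
    apply WreathG.ext
    · funext x; simp [WreathG.aconj, Equiv.Perm.inv_def]
    · simp [WreathG.aconj, mul_assoc]
  · intro v hv
    apply Subtype.ext
    apply WreathG.ext
    · funext x; simp [WreathG.aconj, Equiv.Perm.inv_def]
    · simp [WreathG.aconj, mul_assoc]
  · intro v hv; rfl

/-- If `|g|` stabilizes each block `S j`, then `C_{S_0,…,S_{r−1}}` is an
eigenvector of `φ(g)` with eigenvalue `ζ_r^{e(g)}`, where
`e(g) = ∑_j j·(∑_{i ∈ S_j} z_i(g))`. -/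
theorem CT_eigenvector (r m : ℕ) [NeZero r] (hm : 1 ≤ m)
    (p : Fin r → ℕ) (hp : ∑ j, p j = m)
    (S : Fin r → Finset (Fin (2 * m)))
    (hdisj : ∀ j k, j ≠ k → Disjoint (S j) (S k))
    (hcover : ∀ i, ∃ j, i ∈ S j)
    (hcard : ∀ j, (S j).card = 2 * p j)
    (g : WreathG r (2 * m)) (hg : ∀ j, (S j).image g.p = S j) :
    modelPhi g (CT S) =
      zetaPow r (∑ j : Fin r, (j.val : ZMod r) * ∑ i ∈ S j, g.z i) • CT S := by
  exact CT_eigenvector' r m S g hg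
end
end
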